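/- Let ι be a finite index set, K : ι → ι → ℝ symmetric with K_{mn} ≥ 0, D : ι → ℝ with D_m > 0, θ* : ι → ℝ, and P*_m = Σ_n K_{mn} · sin(θ*_m − θ*_n). Suppose θ : ℝ → ι → ℝ is differentiable and satisfies the reduced swing equation (θ_m)'(t) = D_m^{−1} · (P*_m − Σ_n K_{mn} · sin(θ_m(t) − θ_n(t))) for all t and m. Suppose further that for all t in an interval [a, b] and every pair m ≠ n with K_{mn} > 0, one has δ*_{mn} := θ*_m − θ*_n ∈ (−π/2, π/2) and θ_m(t) − θ_n(t) ∈ (−π − δ*_{mn}, π − δ*_{mn}). Then the function t ↦ H(t) = Σ_m (1/2) D_m (θ*_m − θ_m(t))² is nonincreasing (antitone) on [a, b]. -/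

import Mathlib

open Finset Real

/-- Key pointwise monotonicity: under the regularity conditions,
`(u - v) * (sin u - sin v) ≥ 0`. -/
lemma sin_key (u v : ℝ) (hu1 : -(π / 2) < u) (hu2 : u < π / 2)
    (hv1 : -π - u < v) (hv2 : v < π - u) :
    0 ≤ (u - v) * (Real.sin u - Real.sin v) := by
  have hπ := Real.pi_pos
  have hs : Real.sin u - Real.sin v
      = 2 * Real.sin ((u - v) / 2) * Real.cos ((u + v) / 2) :=
    Real.sin_sub_sin u v
  have hcos : 0 < Real.cos ((u + v) / 2) :=
    Real.cos_pos_of_mem_Ioo ⟨by linarith, by linarith⟩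
  rcases le_total v u with h | h
  · have hsin : 0 ≤ Real.sin ((u - v) / 2) :=
      Real.sin_nonneg_of_nonneg_of_le_pi (by linarith) (by linarith)
    nlinarith [mul_nonneg (mul_nonneg (sub_nonneg.2 h) hsin) hcos.le]
  · have hsin : Real.sin ((u - v) / 2) ≤ 0 := by
      have h2 : 0 ≤ Real.sin ((v - u) / 2) :=
        Real.sin_nonneg_of_nonneg_of_le_pi (by linarith) (by linarith)
      rw [show (u - v) / 2 = -((v - u) / 2) by ring, Real.sin_neg]
      linarith
    nlinarith [mul_nonneg (mul_nonneg (sub_nonneg.2 h) (neg_nonneg.2 hsin)) hcos.le]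

/-- Along any differentiable solution of the reduced (inertia-free) swing
equation such that on `[a, b]` every coupled pair `m ≠ n` (with `K m n > 0`)
has equilibrium difference in `(-π/2, π/2)` and angle difference strictly
between the two closest unstable equilibrium points, the Lyapunov function
`H t = ∑ m, (1/2) * D m * (θs m - θ t m)²` is nonincreasing on `[a, b]`. -/
theorem lyapunov_antitoneOn
    {ι : Type*} [Fintype ι] [LinearOrder ι]
    (K : ι → ι → ℝ) (hsym : ∀ m n, K m n = K n m) (hnonneg : ∀ m n, 0 ≤ K m n)
    (D : ι → ℝ) (hD : ∀ m, 0 < D m)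
    (θs : ι → ℝ) (Ps : ι → ℝ)
    (hPs : ∀ m, Ps m = ∑ n, K m n * Real.sin (θs m - θs n))
    (θ : ℝ → ι → ℝ) (hdiff : ∀ m, Differentiable ℝ (fun t => θ t m))
    (hswing : ∀ t m, deriv (fun s => θ s m) t =
      (D m)⁻¹ * (Ps m - ∑ n, K m n * Real.sin (θ t m - θ t n)))
    (a b : ℝ)
    (hreg : ∀ t ∈ Set.Icc a b, ∀ m n, m ≠ n → 0 < K m n →
      (θs m - θs n) ∈ Set.Ioo (-(π / 2)) (π / 2) ∧
      (θ t m - θ t n) ∈ Set.Ioo (-π - (θs m - θs n)) (π - (θs m - θs n))) :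
    AntitoneOn (fun t => ∑ m, (1 / 2) * D m * (θs m - θ t m) ^ 2)
      (Set.Icc a b) := by
  have hH : ∀ t : ℝ, HasDerivAt (fun t => ∑ m, (1 / 2) * D m * (θs m - θ t m) ^ 2)
      (∑ m, (1 : ℝ) / 2 * D m * ((2 : ℕ) * (θs m - θ t m) ^ 1 *
        (-(deriv (fun s => θ s m) t)))) t := by
    intro t
    apply HasDerivAt.fun_sum
    intro m _
    have h1 : HasDerivAt (fun s => θ s m) (deriv (fun s => θ s m) t) t :=
      ((hdiff m) t).hasDerivAt
    have h2 : HasDerivAt (fun s => θs m - θ s m) (-(deriv (fun s => θ s m) t)) t :=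
      h1.const_sub (θs m)
    exact (h2.pow 2).const_mul ((1 : ℝ) / 2 * D m)
  apply antitoneOn_of_deriv_nonpos (convex_Icc a b)
  · exact fun t _ => (hH t).continuousAt.continuousWithinAt
  · exact fun t _ => ((hH t).differentiableAt).differentiableWithinAt
  · intro x hx
    have hxab : x ∈ Set.Icc a b := interior_subset hx
    rw [(hH x).deriv]
    set B : ι → ι → ℝ := fun m n => (θs m - θ x m) * (K m n *
      (Real.sin (θs m - θs n) - Real.sin (θ x m - θ x n))) with hB
    have hterm : ∀ m, (1 : ℝ) / 2 * D m * ((2 : ℕ) * (θs m - θ x m) ^ 1 *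
        (-(deriv (fun s => θ s m) x))) = -∑ n, B m n := by
      intro m
      have hsum : ∑ n, B m n = (θs m - θ x m) *
          (Ps m - ∑ n, K m n * Real.sin (θ x m - θ x n)) := by
        rw [hPs m, ← Finset.sum_sub_distrib, Finset.mul_sum]
        exact Finset.sum_congr rfl (fun n _ => by simp only [hB]; ring)
      rw [hswing x m, hsum]
      have hDm : (D m) ≠ 0 := (hD m).ne'
      field_simp
      ring
    rw [Finset.sum_congr rfl (fun m _ => hterm m)]
    simp only [Finset.sum_neg_distrib, neg_nonpos]
    -- It suffices that the symmetrized sum is nonneg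
    have hpair : ∀ m n, 0 ≤ B m n + B n m := by
      intro m n
      have hrw : B m n + B n m = K m n * (((θs m - θs n) - (θ x m - θ x n)) *
          (Real.sin (θs m - θs n) - Real.sin (θ x m - θ x n))) := by
        simp only [hB]
        rw [hsym n m, show θs n - θs m = -(θs m - θs n) by ring,
          show θ x n - θ x m = -(θ x m - θ x n) by ring,
          Real.sin_neg, Real.sin_neg]
        ring
      rw [hrw]
      by_cases hmn : m = n
      · subst hmn; simp
      · by_cases hK : 0 < K m n
        · obtain ⟨⟨hu1, hu2⟩, ⟨hv1, hv2⟩⟩ := hreg x hxab m n hmn hK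
          exact mul_nonneg (hnonneg m n) (sin_key _ _ hu1 hu2 hv1 hv2)
        · have : K m n = 0 := le_antisymm (not_lt.1 hK) (hnonneg m n)
          rw [this]; simp
    have h2 : (0 : ℝ) ≤ ∑ m, ∑ n, (B m n + B n m) :=
      Finset.sum_nonneg fun m _ => Finset.sum_nonneg fun n _ => hpair m n
    have h3 : ∑ m, ∑ n, (B m n + B n m)
        = (∑ m, ∑ n, B m n) + (∑ m, ∑ n, B n m) := by
      simp [Finset.sum_add_distrib]
    have h4 : (∑ m, ∑ n, B n m) = ∑ m, ∑ n, B m n := Finset.sum_comm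
    linarith [h2, h3.symm, h4]
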